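/- Let 1 < p < ∞ and write points of ℝ^d as x = (y,t) ∈ ℝ^{d−1} × ℝ. For any measurable f : ℝ^d → ℂ, the weak Lorentz norm satisfies ‖f‖_{L^{p,∞}(ℝ^d)} ≤ ‖ t ↦ ‖f(·,t)‖_{L^{p,∞}(ℝ^{d−1})} ‖_{L^p(ℝ)}. -/

import Mathlib

open MeasureTheory
open scoped ENNReal NNReal

/-- The weak `L^p` (Lorentz `L^{p,∞}`) quasinorm:
`‖f‖_{L^{p,∞}} = sup_{λ > 0} λ · μ{|f| > λ}^{1/p}`. -/
noncomputable def wLpNorm {α : Type*} [MeasurableSpace α] (μ : Measure α) (p : ℝ)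
    (f : α → ℂ) : ℝ≥0∞ :=
  ⨆ l : ℝ≥0, (l : ℝ≥0∞) * μ {x | (l : ℝ) < ‖f x‖} ^ (1 / p)

/-- For `1 < p < ∞` and `f` on `ℝ^d = ℝ^{d-1} × ℝ`, the weak norm of `f` is dominated by
the mixed norm taking first the weak `L^p` norm in `y` and then the `L^p` norm in `t`. -/
theorem weak_norm_le_mixed_norm {n : ℕ} (p : ℝ) (hp : 1 < p)
    (f : EuclideanSpace ℝ (Fin n) × ℝ → ℂ) (hf : Measurable f) :
    wLpNorm volume p f ≤
      (∫⁻ t : ℝ, (wLpNorm volume p (fun y => f (y, t))) ^ p) ^ (1 / p) := by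
  rw [wLpNorm]
  apply iSup_le
  intro l
  rcases eq_or_ne l 0 with rfl | hl
  · simp
  have hl0 : (l : ℝ≥0∞) ≠ 0 := by exact_mod_cast hl
  have hlt : (l : ℝ≥0∞) ≠ ⊤ := ENNReal.coe_ne_top
  have hp0 : (0:ℝ) < p := lt_trans one_pos hp
  set A := ∫⁻ t : ℝ, (wLpNorm volume p (fun y => f (y, t))) ^ p with hA
  have hs : MeasurableSet {x : EuclideanSpace ℝ (Fin n) × ℝ | (l : ℝ) < ‖f x‖} :=
    measurableSet_lt measurable_const hf.norm
  have hlp0 : ((l : ℝ≥0∞)) ^ p ≠ 0 := by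
    simp [ENNReal.rpow_eq_zero_iff, hl0, hp0, hlt]
  have hlpt : ((l : ℝ≥0∞)) ^ p ≠ ⊤ := by
    simp [ENNReal.rpow_eq_top_iff, hl0, hp0.le, hlt, not_lt.2 hp0.le]
  have key : volume {x : EuclideanSpace ℝ (Fin n) × ℝ | (l : ℝ) < ‖f x‖}
      ≤ A / (l : ℝ≥0∞) ^ p := by
    rw [Measure.volume_eq_prod, Measure.prod_apply_symm hs]
    have step : ∀ t : ℝ,
        volume ((fun y : EuclideanSpace ℝ (Fin n) => (y, t)) ⁻¹'
          {x : EuclideanSpace ℝ (Fin n) × ℝ | (l : ℝ) < ‖f x‖})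
        ≤ (wLpNorm volume p (fun y => f (y, t))) ^ p / (l : ℝ≥0∞) ^ p := by
      intro t
      set V := volume {y : EuclideanSpace ℝ (Fin n) | (l : ℝ) < ‖f (y, t)‖} with hV
      have h1 : (l : ℝ≥0∞) * V ^ (1 / p) ≤ wLpNorm volume p (fun y => f (y, t)) :=
        le_iSup (fun l' : ℝ≥0 => (l' : ℝ≥0∞) *
          volume {y : EuclideanSpace ℝ (Fin n) | (l' : ℝ) < ‖f (y, t)‖} ^ (1 / p)) l
      have h2 : V ^ (1 / p) ≤ wLpNorm volume p (fun y => f (y, t)) / (l : ℝ≥0∞) :=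
        (ENNReal.le_div_iff_mul_le (Or.inl hl0) (Or.inl hlt)).2 (by rwa [mul_comm])
      have h3 : V ≤ (wLpNorm volume p (fun y => f (y, t)) / (l : ℝ≥0∞)) ^ p := by
        have := ENNReal.rpow_le_rpow h2 hp0.le
        rwa [← ENNReal.rpow_mul, one_div_mul_cancel hp0.ne', ENNReal.rpow_one] at this
      have heq : ((fun y : EuclideanSpace ℝ (Fin n) => (y, t)) ⁻¹'
          {x : EuclideanSpace ℝ (Fin n) × ℝ | (l : ℝ) < ‖f x‖})
          = {y : EuclideanSpace ℝ (Fin n) | (l : ℝ) < ‖f (y, t)‖} := rfl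
      rw [heq, ← hV]
      calc V ≤ (wLpNorm volume p (fun y => f (y, t)) / (l : ℝ≥0∞)) ^ p := h3
        _ = (wLpNorm volume p (fun y => f (y, t))) ^ p / (l : ℝ≥0∞) ^ p :=
          ENNReal.div_rpow_of_nonneg _ _ hp0.le
    calc ∫⁻ t : ℝ, volume ((fun y : EuclideanSpace ℝ (Fin n) => (y, t)) ⁻¹'
          {x : EuclideanSpace ℝ (Fin n) × ℝ | (l : ℝ) < ‖f x‖})
        ≤ ∫⁻ t : ℝ, (wLpNorm volume p (fun y => f (y, t))) ^ p / (l : ℝ≥0∞) ^ p :=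
          lintegral_mono step
      _ = A / (l : ℝ≥0∞) ^ p := by
          simp_rw [div_eq_mul_inv]
          rw [lintegral_mul_const' _ _ (by simpa using hlp0)]
  calc (l : ℝ≥0∞) * volume {x : EuclideanSpace ℝ (Fin n) × ℝ | (l : ℝ) < ‖f x‖} ^ (1 / p)
      ≤ (l : ℝ≥0∞) * (A / (l : ℝ≥0∞) ^ p) ^ (1 / p) := by
        exact mul_le_mul_right (ENNReal.rpow_le_rpow key (by positivity)) _
    _ = A ^ (1 / p) := by
        rw [ENNReal.div_rpow_of_nonneg _ _ (by positivity), ← ENNReal.rpow_mul,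
          mul_one_div_cancel hp0.ne', ENNReal.rpow_one, ENNReal.mul_div_cancel hl0 hlt]
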